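/- Let p ≥ 1, ω := p + 1 − ⌈p⌉, and let (X_i^{(n)})_{i∈T_n} be random fields with α-mixing coefficients (α_{ℓ,n}). Suppose α_{ℓ,n} ≤ C ℓ^{−v} for all ℓ, n, for constants (independent of n) C > 0, r > p + 2, and v > (d(p+2) + 2(1−ω)) r / (2(r−p−2)). Set u := (r−p−2)v/r − 1 + ω. Then for any ε > 0: M_n = O(|T_n|^{−βp}) with β = 1/2 if u > d(p+1); β = 1/2 − ε if u = d(p+1); and β = 1/2 − ((p+1)/p − u/(dp)) if d(p+2)/2 < u < d(p+1). -/

import Mathlib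

open MeasureTheory ProbabilityTheory Filter

noncomputable section

namespace Paper

variable {Ω : Type*} [MeasurableSpace Ω]

/-- The α-mixing coefficient between two sub-σ-algebras of a probability space. -/
def alphaSigma (μ : Measure Ω) (m₁ m₂ : MeasurableSpace Ω) : ℝ :=
  sSup {x : ℝ | ∃ A B : Set Ω, MeasurableSet[m₁] A ∧ MeasurableSet[m₂] B ∧
    x = |(μ (A ∩ B)).toReal - (μ A).toReal * (μ B).toReal|}

/-- The σ-algebra generated by the random variables `X i`, `i ∈ U`. -/
def genSigma {d : ℕ} (X : (Fin d → ℤ) → Ω → ℝ) (U : Finset (Fin d → ℤ)) :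
    MeasurableSpace Ω :=
  ⨆ i ∈ U, MeasurableSpace.comap (X i) inferInstance

/-- Maximum-norm distance between two points of `ℤ^d`. -/
def zdist {d : ℕ} (i j : Fin d → ℤ) : ℕ :=
  Finset.univ.sup fun t => (i t - j t).natAbs

/-- The α-mixing coefficient `α_ℓ^{[k]}` of the random field `(X i)_{i ∈ T}`. -/
def fieldAlpha (μ : Measure Ω) {d : ℕ} (X : (Fin d → ℤ) → Ω → ℝ)
    (T : Finset (Fin d → ℤ)) (k ℓ : ℕ) : ℝ :=
  max 0 (sSup {x : ℝ | ∃ U₁ U₂ : Finset (Fin d → ℤ), U₁ ⊆ T ∧ U₂ ⊆ T ∧ U₁.card ≤ k ∧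
    (∀ i ∈ U₁, ∀ j ∈ U₂, ℓ ≤ zdist i j) ∧
    x = alphaSigma μ (genSigma X U₁) (genSigma X U₂)})

/-- The `n`-th moment `E[X^n]`. -/
def mom (μ : Measure Ω) (X : Ω → ℝ) (n : ℕ) : ℝ := ∫ ω, X ω ^ n ∂μ

/-- Cumulants, defined through the classical moment–cumulant recursion
`μ_n = ∑_{j=1}^n C(n-1, j-1) κ_j μ_{n-j}` (with `μ_0 = 1`). -/
def cumulant (μ : Measure Ω) (X : Ω → ℝ) : ℕ → ℝ
  | 0 => 0
  | n + 1 =>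
      mom μ X (n + 1) -
        ∑ j ∈ (Finset.range n).attach,
          (n.choose j.1 : ℝ) * cumulant μ X (j.1 + 1) * mom μ X (n - j.1)
  termination_by n => n
  decreasing_by
    have := Finset.mem_range.mp j.2
    omega

/-- The standard normal distribution `N(0,1)`. -/
def stdGaussian : Measure ℝ := gaussianReal 0 1

/-- `𝒩 h`, the expectation of `h` under the standard normal distribution. -/
def gaussMean (h : ℝ → ℝ) : ℝ := ∫ x, h x ∂stdGaussian

/-- `Θ h`, the solution of Stein's equation `x f(x) - f'(x) = 𝒩h - h(x)`. -/
def steinSol (h : ℝ → ℝ) : ℝ → ℝ := fun x =>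
  Real.exp (x ^ 2 / 2) * ∫ t in Set.Iio x, (h t - gaussMean h) * Real.exp (-t ^ 2 / 2)

/-- The composition `(∂^{s₁+1}Θ) ∘ (∂^{s₂+1}Θ) ∘ ⋯ ∘ (∂^{s_r+1}Θ) h`
for `L = [s₁, …, s_r]`. -/
def steinChain (L : List ℕ) (h : ℝ → ℝ) : ℝ → ℝ :=
  L.foldr (fun s g => iteratedDeriv (s + 1) (steinSol g)) h

/-- The cumulant-based Edgeworth expansion
`∑_{(r,s)∈Γ(k)} (-1)^r ∏_j κ_{s_j+2}(Y)/(s_j+1)! ⋅ 𝒩[(∂^{s₁+1}Θ)∘⋯∘(∂^{s_r+1}Θ) h]`,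
where `Γ(k)` consists of all tuples of positive integers with total sum at most `k`. -/
def edgeworthSum (μ : Measure Ω) (Y : Ω → ℝ) (k : ℕ) (h : ℝ → ℝ) : ℝ :=
  ∑ m ∈ Finset.Icc 1 k, ∑ c : Composition m,
    (-1 : ℝ) ^ c.length *
      (c.blocks.map fun s => cumulant μ Y (s + 2) / (Nat.factorial (s + 1) : ℝ)).prod *
      gaussMean (steinChain c.blocks h)

/-- The set of Hölder quotients of the `k`-th derivative of `f`. -/
def holderSet (k : ℕ) (ω : ℝ) (f : ℝ → ℝ) : Set ℝ :=
  {c : ℝ | ∃ x y : ℝ, x ≠ y ∧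
    c = |iteratedDeriv k f x - iteratedDeriv k f y| / |x - y| ^ ω}

/-- The Hölder coefficient `|f|_{k,ω}`. -/
def holderCoef (k : ℕ) (ω : ℝ) (f : ℝ → ℝ) : ℝ := sSup (holderSet k ω f)

/-- Membership in the Hölder space `C^{k,ω}(ℝ)`. -/
def HolderSmooth (k : ℕ) (ω : ℝ) (f : ℝ → ℝ) : Prop :=
  ContDiff ℝ k f ∧ BddAbove (holderSet k ω f)

/-- The class `Λ_p` of Hölder smooth functions with `|f|_{⌈p⌉-1,ω} ≤ 1`,
`ω = p + 1 - ⌈p⌉`. -/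
def LambdaP (p : ℝ) (f : ℝ → ℝ) : Prop :=
  HolderSmooth (⌈p⌉₊ - 1) (p + 1 - (⌈p⌉₊ : ℝ)) f ∧
    holderCoef (⌈p⌉₊ - 1) (p + 1 - (⌈p⌉₊ : ℝ)) f ≤ 1

/-- `γ` is a coupling of `ν₁` and `ν₂`. -/
def IsCoupling (γ : Measure (ℝ × ℝ)) (ν₁ ν₂ : Measure ℝ) : Prop :=
  γ.map Prod.fst = ν₁ ∧ γ.map Prod.snd = ν₂

/-- The Wasserstein-`p` distance between two probability measures on `ℝ`. -/
def wassersteinDist (p : ℝ) (ν₁ ν₂ : Measure ℝ) : ℝ :=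
  sInf {x : ℝ | ∃ γ : Measure (ℝ × ℝ), IsProbabilityMeasure γ ∧ IsCoupling γ ν₁ ν₂ ∧
    x = (∫ z, |z.1 - z.2| ^ p ∂γ) ^ (1 / p)}

variable {d : ℕ}

/-- The sum `∑_{i ∈ T_n} X_i^{(n)}`. -/
def fieldSum (T : ℕ → Finset (Fin d → ℤ)) (X : ℕ → (Fin d → ℤ) → Ω → ℝ) (n : ℕ) :
    Ω → ℝ := fun ω => ∑ i ∈ T n, X n i ω

/-- `σ_n² = Var(∑_{i ∈ T_n} X_i^{(n)})`. -/
def sigma2 (μ : Measure Ω) (T : ℕ → Finset (Fin d → ℤ))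
    (X : ℕ → (Fin d → ℤ) → Ω → ℝ) (n : ℕ) : ℝ :=
  variance (fieldSum T X n) μ

/-- The rescaled average `W_n = σ_n⁻¹ ∑_{i ∈ T_n} X_i^{(n)}`. -/
def Wfield (μ : Measure Ω) (T : ℕ → Finset (Fin d → ℤ))
    (X : ℕ → (Fin d → ℤ) → Ω → ℝ) (n : ℕ) : Ω → ℝ :=
  fun ω => fieldSum T X n ω / Real.sqrt (sigma2 μ T X n)

/-- The non-degeneracy condition `0 < liminf σ_n²/|T_n| < ∞`. -/
def Nondeg (μ : Measure Ω) (T : ℕ → Finset (Fin d → ℤ))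
    (X : ℕ → (Fin d → ℤ) → Ω → ℝ) : Prop :=
  0 < Filter.liminf (fun n => ENNReal.ofReal (sigma2 μ T X n / (T n).card)) atTop ∧
    Filter.liminf (fun n => ENNReal.ofReal (sigma2 μ T X n / (T n).card)) atTop < ⊤

/-- The uniform moment condition `sup_{n, i ∈ T_n} E[|X_i^{(n)}|^r] < ∞`. -/
def MomentCond (μ : Measure Ω) (T : ℕ → Finset (Fin d → ℤ))
    (X : ℕ → (Fin d → ℤ) → Ω → ℝ) (r : ℝ) : Prop :=
  ∃ M : ℝ, ∀ n : ℕ, ∀ i ∈ T n,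
    (∫⁻ ω, ENNReal.ofReal (|X n i ω| ^ r) ∂μ) ≤ ENNReal.ofReal M

/-- The field consists of measurable, integrable, mean-zero random variables. -/
def MeanZero (μ : Measure Ω) (T : ℕ → Finset (Fin d → ℤ))
    (X : ℕ → (Fin d → ℤ) → Ω → ℝ) : Prop :=
  (∀ n i, Measurable (X n i)) ∧
    ∀ n : ℕ, ∀ i ∈ T n, Integrable (X n i) μ ∧ ∫ ω, X n i ω ∂μ = 0

/-- The index sets are nested and `|T_n| → ∞`. -/
def Growing (T : ℕ → Finset (Fin d → ℤ)) : Prop :=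
  (∀ n, T n ⊆ T (n + 1)) ∧ Tendsto (fun n => (T n).card) atTop atTop

/-- `sup_n ∑_{ℓ=1}^∞ ℓ^{d-1} α_{ℓ,n}^e < ∞`, expressed through uniformly bounded
partial sums. -/
def MixSumBound (μ : Measure Ω) (T : ℕ → Finset (Fin d → ℤ))
    (X : ℕ → (Fin d → ℤ) → Ω → ℝ) (k : ℕ) (e : ℝ) : Prop :=
  ∃ L : ℝ, ∀ n N : ℕ,
    ∑ ℓ ∈ Finset.Icc 1 N,
      (ℓ : ℝ) ^ (d - 1) * fieldAlpha μ (X n) (T n) k ℓ ^ e ≤ L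

/-- The quantity `M_n` of the paper. -/
def Mseq (μ : Measure Ω) (T : ℕ → Finset (Fin d → ℤ))
    (X : ℕ → (Fin d → ℤ) → Ω → ℝ) (p r : ℝ) (n : ℕ) : ℝ :=
  ((T n).card : ℝ) ^ (-(p / 2)) *
    ∑ ℓ ∈ Finset.Icc 1 (⌊((T n).card : ℝ) ^ ((d : ℝ)⁻¹)⌋₊),
      (ℓ : ℝ) ^ ((d : ℝ) * (p + 1) - (p + 1 - (⌈p⌉₊ : ℝ))) *
        fieldAlpha μ (X n) (T n) (⌈p⌉₊ + 1) ℓ ^ ((r - p - 2) / r)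

/-- The quantity `M^{(i)}_{n,m,δ}` of the paper (with σ-algebra size parameter `k`). -/
def MseqI (μ : Measure Ω) (T : ℕ → Finset (Fin d → ℤ))
    (X : ℕ → (Fin d → ℤ) → Ω → ℝ) (p : ℕ) (r δ : ℝ) (k m n : ℕ) : ℝ :=
  ((T n).card : ℝ) ^ (-(((p : ℝ) - 1 + δ) / 2)) * (m : ℝ) ^ (d * p) *
    ∑ ℓ ∈ Finset.Icc (m + 1) (m + 1 + ⌊((T n).card : ℝ) ^ ((d : ℝ)⁻¹) / 2⌋₊),
      (ℓ : ℝ) ^ ((d : ℝ) * δ - δ) *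
        fieldAlpha μ (X n) (T n) k ℓ ^ ((r - p - 1 - δ) / r)

/-- The quantity `M^{(ii)}_{n,m}` of the paper (with σ-algebra size parameter `k`). -/
def MseqII (μ : Measure Ω) (T : ℕ → Finset (Fin d → ℤ))
    (X : ℕ → (Fin d → ℤ) → Ω → ℝ) (p : ℕ) (r : ℝ) (k m n : ℕ) : ℝ :=
  ((T n).card : ℝ) ^ (-(((p : ℝ) - 1) / 2)) * (m : ℝ) ^ (d * p) *
    ∑ ℓ ∈ Finset.Icc (m + 1) (m + 1 + ⌊((T n).card : ℝ) ^ ((d : ℝ)⁻¹) / 2⌋₊),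
      (ℓ : ℝ) ^ (d * p - 1) *
        fieldAlpha μ (X n) (T n) k ℓ ^ ((r - p - 1) / r)

open Classical in
/-- The piecewise exponent `β` (five cases) in terms of `u`. -/
def betaOf (d p : ℕ) (u ε : ℝ) : ℝ :=
  if (d : ℝ) * (p + 1) < u then 1 / 2
  else if u = (d : ℝ) * (p + 1) then 1 / 2 - ε
  else if (d : ℝ) * p < u then
    1 / 2 - min ((p + 1) / p - u / (d * p)) ((d : ℝ) / (u + d * p))
  else if u = (d : ℝ) * p then 1 / 2 - (1 / (2 * p) + ε)
  else 1 / 2 - ((2 * p + 1) / (2 * p) - u / (d * p))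

open Classical in
/-- The piecewise exponent `β` (three cases) in terms of `u`. -/
def betaOf2 (d : ℕ) (p u ε : ℝ) : ℝ :=
  if (d : ℝ) * (p + 1) < u then 1 / 2
  else if u = (d : ℝ) * (p + 1) then 1 / 2 - ε
  else 1 / 2 - ((p + 1) / p - u / (d * p))

/-- Stationarity of a random field indexed by `ℤ^d`: all joint distributions are
invariant under translations of the index. -/
def Stationary (μ : Measure Ω) {d : ℕ} (Y : (Fin d → ℤ) → Ω → ℝ) : Prop :=
  ∀ (v : Fin d → ℤ) (k : ℕ) (idx : Fin k → (Fin d → ℤ)),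
    μ.map (fun ω j => Y (idx j) ω) = μ.map (fun ω j => Y (idx j + v) ω)


private lemma mvt_rpow_aux {b : ℝ} (hb0 : 0 < b) (hb1 : b ≤ 1) (i : ℕ) :
    b * ((i : ℝ) + 1) ^ (b - 1) ≤ ((i : ℝ) + 1) ^ b - (i : ℝ) ^ b := by
  have hx : (0:ℝ) ≤ (i:ℝ) := Nat.cast_nonneg i
  have hcont : ContinuousOn (fun x : ℝ => x ^ b) (Set.Icc (i : ℝ) ((i:ℝ)+1)) := by
    apply Continuous.continuousOn
    exact continuous_iff_continuousAt.2 fun x => Real.continuousAt_rpow_const x b (Or.inr hb0.le)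
  obtain ⟨c, hc, hceq⟩ := exists_hasDerivAt_eq_slope (fun x : ℝ => x ^ b)
    (fun x => b * x ^ (b - 1)) (by linarith) hcont
    (fun x hx' => Real.hasDerivAt_rpow_const (Or.inl (by nlinarith [hx'.1])))
  have hc0 : 0 < c := lt_of_le_of_lt hx hc.1
  have h1 : ((i:ℝ)+1) ^ (b-1) ≤ c ^ (b-1) :=
    Real.rpow_le_rpow_of_nonpos hc0 hc.2.le (by linarith)
  have h2 := mul_le_mul_of_nonneg_left h1 hb0.le
  rw [hceq] at h2
  simpa using h2

private lemma sum_rpow_le_aux {b : ℝ} (hb0 : 0 < b) (hb1 : b ≤ 1) (N : ℕ) :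
    ∑ ℓ ∈ Finset.Icc 1 N, (ℓ : ℝ) ^ (b - 1) ≤ (N : ℝ) ^ b / b := by
  rw [le_div_iff₀ hb0]
  have h1 : ∑ ℓ ∈ Finset.Icc 1 N, (ℓ : ℝ) ^ (b - 1)
      = ∑ i ∈ Finset.range N, ((i : ℝ) + 1) ^ (b - 1) := by
    rw [← Finset.Ico_add_one_right_eq_Icc, Finset.sum_Ico_eq_sum_range]
    simp [add_comm, Nat.cast_add]
  rw [h1, Finset.sum_mul]
  calc ∑ i ∈ Finset.range N, ((i:ℝ)+1) ^ (b-1) * b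
      ≤ ∑ i ∈ Finset.range N, (((i:ℝ)+1) ^ b - (i:ℝ) ^ b) := by
        apply Finset.sum_le_sum
        intro i _
        have := mvt_rpow_aux hb0 hb1 i
        linarith
    _ = (N : ℝ) ^ b - (0 : ℝ) ^ b := by
        have := Finset.sum_range_sub (fun i : ℕ => (i : ℝ) ^ b) N
        simpa using this
    _ ≤ (N : ℝ) ^ b := by
        rw [Real.zero_rpow hb0.ne']; simp

/-- Proposition 2.3 of the paper: decay rate of `M_n` when the
α-mixing coefficients decay polynomially. -/
theorem Mseq_polynomial_rate
    {Ω : Type*} [MeasurableSpace Ω] (μ : Measure Ω) [IsProbabilityMeasure μ]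
    {d : ℕ} (hd : 0 < d)
    (T : ℕ → Finset (Fin d → ℤ)) (X : ℕ → (Fin d → ℤ) → Ω → ℝ)
    (hT : Growing T)
    (p : ℝ) (hp : 1 ≤ p) (C r v : ℝ) (hC : 0 < C) (hr : p + 2 < r)
    (hv : ((d : ℝ) * (p + 2) + 2 * (1 - (p + 1 - (⌈p⌉₊ : ℝ)))) * r /
        (2 * (r - p - 2)) < v)
    (hα : ∀ n ℓ : ℕ, 1 ≤ ℓ →
      fieldAlpha μ (X n) (T n) (⌈p⌉₊ + 1) ℓ ≤ C * (ℓ : ℝ) ^ (-v)) :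
    ∀ ε > 0, ∃ K : ℝ, ∀ᶠ n in atTop,
      |Mseq μ T X p r n| ≤
        K * ((T n).card : ℝ) ^
          (-(betaOf2 d p ((r - p - 2) * v / r - 1 + (p + 1 - (⌈p⌉₊ : ℝ))) ε * p)) := by
  intro ε hε
  have hp0 : (0:ℝ) < p := by linarith
  have hr0 : (0:ℝ) < r := by linarith
  have hrp : (0:ℝ) < r - p - 2 := by linarith
  have he0 : (0:ℝ) < (r - p - 2) / r := div_pos hrp hr0
  have hdR : (0:ℝ) < (d:ℝ) := by exact_mod_cast hd
  -- nonnegativity of Mseq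
  have hMnn : ∀ n, 0 ≤ Mseq μ T X p r n := by
    intro n
    apply mul_nonneg (Real.rpow_nonneg (Nat.cast_nonneg _) _)
    exact Finset.sum_nonneg fun ℓ _ => mul_nonneg (Real.rpow_nonneg (Nat.cast_nonneg _) _)
      (Real.rpow_nonneg (le_max_left _ _) _)
  -- the key termwise bound
  have key : ∀ n, Mseq μ T X p r n ≤ ((T n).card : ℝ) ^ (-(p/2)) *
      (C ^ ((r - p - 2) / r) *
        ∑ ℓ ∈ Finset.Icc 1 (⌊((T n).card : ℝ) ^ ((d : ℝ)⁻¹)⌋₊),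
          (ℓ:ℝ) ^ ((d:ℝ)*(p+1) - 1 - ((r - p - 2) * v / r - 1 + (p + 1 - (⌈p⌉₊ : ℝ))))) := by
    intro n
    rw [Mseq]
    apply mul_le_mul_of_nonneg_left _ (Real.rpow_nonneg (Nat.cast_nonneg _) _)
    rw [Finset.mul_sum]
    apply Finset.sum_le_sum
    intro ℓ hℓ
    have hℓ1 : 1 ≤ ℓ := (Finset.mem_Icc.1 hℓ).1
    have hℓR : (1:ℝ) ≤ (ℓ:ℝ) := by exact_mod_cast hℓ1
    have hℓ0 : (0:ℝ) < (ℓ:ℝ) := by linarith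
    have h1 : fieldAlpha μ (X n) (T n) (⌈p⌉₊ + 1) ℓ ^ ((r - p - 2) / r)
        ≤ (C * (ℓ:ℝ) ^ (-v)) ^ ((r - p - 2) / r) :=
      Real.rpow_le_rpow (le_max_left _ _) (hα n ℓ hℓ1) he0.le
    have h2 : (C * (ℓ:ℝ) ^ (-v)) ^ ((r - p - 2) / r)
        = C ^ ((r - p - 2) / r) * (ℓ:ℝ) ^ (-v * ((r - p - 2) / r)) := by
      rw [Real.mul_rpow hC.le (Real.rpow_nonneg hℓ0.le _), ← Real.rpow_mul hℓ0.le]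
    calc (ℓ:ℝ) ^ ((d:ℝ)*(p+1) - (p + 1 - (⌈p⌉₊ : ℝ))) *
            fieldAlpha μ (X n) (T n) (⌈p⌉₊ + 1) ℓ ^ ((r - p - 2) / r)
        ≤ (ℓ:ℝ) ^ ((d:ℝ)*(p+1) - (p + 1 - (⌈p⌉₊ : ℝ))) *
            (C ^ ((r - p - 2) / r) * (ℓ:ℝ) ^ (-v * ((r - p - 2) / r))) := by
          rw [← h2]
          exact mul_le_mul_of_nonneg_left h1 (Real.rpow_nonneg hℓ0.le _)
      _ = C ^ ((r - p - 2) / r) *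
            (ℓ:ℝ) ^ ((d:ℝ)*(p+1) - 1 - ((r - p - 2) * v / r - 1 + (p + 1 - (⌈p⌉₊ : ℝ)))) := by
          rw [mul_left_comm, ← Real.rpow_add hℓ0]
          congr 1
          ring
  set u : ℝ := (r - p - 2) * v / r - 1 + (p + 1 - (⌈p⌉₊ : ℝ)) with hu
  have hcard1 : ∀ᶠ n in atTop, 1 ≤ (T n).card := hT.2.eventually_ge_atTop 1
  by_cases h1 : (d:ℝ) * (p+1) < u
  · -- case β = 1/2
    have ha : (d:ℝ)*(p+1) - 1 - u < -1 := by linarith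
    have hsum : Summable (fun ℓ : ℕ => (ℓ:ℝ) ^ ((d:ℝ)*(p+1) - 1 - u)) :=
      Real.summable_nat_rpow.2 ha
    refine ⟨C ^ ((r - p - 2) / r) * ∑' ℓ : ℕ, (ℓ:ℝ) ^ ((d:ℝ)*(p+1) - 1 - u),
      Filter.Eventually.of_forall fun n => ?_⟩
    rw [abs_of_nonneg (hMnn n), betaOf2, if_pos h1]
    have hb : -((1:ℝ)/2 * p) = -(p/2) := by ring
    rw [hb]
    calc Mseq μ T X p r n
        ≤ ((T n).card : ℝ) ^ (-(p/2)) * (C ^ ((r - p - 2) / r) *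
            ∑ ℓ ∈ Finset.Icc 1 (⌊((T n).card : ℝ) ^ ((d : ℝ)⁻¹)⌋₊),
              (ℓ:ℝ) ^ ((d:ℝ)*(p+1) - 1 - u)) := key n
      _ ≤ ((T n).card : ℝ) ^ (-(p/2)) * (C ^ ((r - p - 2) / r) *
            ∑' ℓ : ℕ, (ℓ:ℝ) ^ ((d:ℝ)*(p+1) - 1 - u)) := by
          apply mul_le_mul_of_nonneg_left _ (Real.rpow_nonneg (Nat.cast_nonneg _) _)
          exact mul_le_mul_of_nonneg_left
            (Summable.sum_le_tsum _ (fun i _ => Real.rpow_nonneg (Nat.cast_nonneg _) _) hsum)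
            (Real.rpow_nonneg hC.le _)
      _ = C ^ ((r - p - 2) / r) * (∑' ℓ : ℕ, (ℓ:ℝ) ^ ((d:ℝ)*(p+1) - 1 - u)) *
            ((T n).card : ℝ) ^ (-(p/2)) := by ring
  by_cases h2 : u = (d:ℝ) * (p+1)
  · -- case β = 1/2 - ε
    set η : ℝ := min ((d:ℝ) * p * ε) 1 with hη
    have hη0 : 0 < η := lt_min (by positivity) one_pos
    have hη1 : η ≤ 1 := min_le_right _ _
    refine ⟨C ^ ((r - p - 2) / r) * (1 / η), ?_⟩
    filter_upwards [hcard1] with n hn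
    have hcR : (1:ℝ) ≤ ((T n).card : ℝ) := by exact_mod_cast hn
    have hc0 : (0:ℝ) < ((T n).card : ℝ) := by linarith
    rw [abs_of_nonneg (hMnn n), betaOf2, if_neg h1, if_pos h2]
    set N : ℕ := ⌊((T n).card : ℝ) ^ ((d : ℝ)⁻¹)⌋₊ with hN
    have hNle : (N:ℝ) ≤ ((T n).card : ℝ) ^ ((d : ℝ)⁻¹) :=
      Nat.floor_le (Real.rpow_nonneg hc0.le _)
    have hsum1 : ∑ ℓ ∈ Finset.Icc 1 N, (ℓ:ℝ) ^ ((d:ℝ)*(p+1) - 1 - u)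
        ≤ ∑ ℓ ∈ Finset.Icc 1 N, (ℓ:ℝ) ^ (η - 1) := by
      apply Finset.sum_le_sum
      intro ℓ hℓ
      have hℓ1 : 1 ≤ ℓ := (Finset.mem_Icc.1 hℓ).1
      have hℓR : (1:ℝ) ≤ (ℓ:ℝ) := by exact_mod_cast hℓ1
      apply Real.rpow_le_rpow_of_exponent_le hℓR
      rw [h2]; linarith
    have hsum2 : ∑ ℓ ∈ Finset.Icc 1 N, (ℓ:ℝ) ^ (η - 1) ≤ (N:ℝ) ^ η / η :=
      sum_rpow_le_aux hη0 hη1 N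
    have hN2 : (N:ℝ) ^ η ≤ ((T n).card : ℝ) ^ ((d:ℝ)⁻¹ * η) := by
      rw [Real.rpow_mul hc0.le]
      exact Real.rpow_le_rpow (Nat.cast_nonneg _) hNle hη0.le
    have hN3 : ((T n).card : ℝ) ^ ((d:ℝ)⁻¹ * η) ≤ ((T n).card : ℝ) ^ (ε * p) := by
      apply Real.rpow_le_rpow_of_exponent_le hcR
      have hηle : η ≤ (d:ℝ) * p * ε := min_le_left _ _
      rw [inv_mul_le_iff₀ hdR]
      nlinarith
    calc Mseq μ T X p r n
        ≤ ((T n).card : ℝ) ^ (-(p/2)) * (C ^ ((r - p - 2) / r) *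
            ∑ ℓ ∈ Finset.Icc 1 N, (ℓ:ℝ) ^ ((d:ℝ)*(p+1) - 1 - u)) := key n
      _ ≤ ((T n).card : ℝ) ^ (-(p/2)) * (C ^ ((r - p - 2) / r) *
            (((T n).card : ℝ) ^ (ε * p) / η)) := by
          apply mul_le_mul_of_nonneg_left _ (Real.rpow_nonneg (Nat.cast_nonneg _) _)
          apply mul_le_mul_of_nonneg_left _ (Real.rpow_nonneg hC.le _)
          calc ∑ ℓ ∈ Finset.Icc 1 N, (ℓ:ℝ) ^ ((d:ℝ)*(p+1) - 1 - u)
              ≤ (N:ℝ) ^ η / η := le_trans hsum1 hsum2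
            _ ≤ ((T n).card : ℝ) ^ (ε * p) / η := by
                gcongr
                exact le_trans hN2 hN3
      _ = C ^ ((r - p - 2) / r) * (1 / η) *
            (((T n).card : ℝ) ^ (-(p/2)) * ((T n).card : ℝ) ^ (ε * p)) := by ring
      _ = C ^ ((r - p - 2) / r) * (1 / η) *
            ((T n).card : ℝ) ^ (-((1/2 - ε) * p)) := by
          rw [← Real.rpow_add hc0]
          congr 1
          ring
  · -- case β = 1/2 - ((p+1)/p - u/(dp))
    have h3 : u < (d:ℝ) * (p+1) := lt_of_le_of_ne (not_lt.1 h1) h2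
    set b : ℝ := (d:ℝ) * (p+1) - u with hb
    have hb0 : 0 < b := by simp only [hb]; linarith
    have hsumb : ∀ N : ℕ, ∑ ℓ ∈ Finset.Icc 1 N, (ℓ:ℝ) ^ (b - 1)
        ≤ max (1/b) 1 * (N:ℝ) ^ b := by
      intro N
      rcases le_or_gt b 1 with hb1 | hb1
      · calc ∑ ℓ ∈ Finset.Icc 1 N, (ℓ:ℝ) ^ (b - 1) ≤ (N:ℝ) ^ b / b :=
            sum_rpow_le_aux hb0 hb1 N
          _ = 1/b * (N:ℝ) ^ b := by ring
          _ ≤ max (1/b) 1 * (N:ℝ) ^ b :=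
            mul_le_mul_of_nonneg_right (le_max_left _ _) (Real.rpow_nonneg (Nat.cast_nonneg _) _)
      · rcases Nat.eq_zero_or_pos N with hN0 | hN0
        · subst hN0
          simp [Real.zero_rpow hb0.ne']
        have hNR : (1:ℝ) ≤ (N:ℝ) := by exact_mod_cast hN0
        have hterm : ∀ ℓ ∈ Finset.Icc 1 N, (ℓ:ℝ) ^ (b - 1) ≤ (N:ℝ) ^ (b - 1) := by
          intro ℓ hℓ
          have hℓN : ℓ ≤ N := (Finset.mem_Icc.1 hℓ).2
          exact Real.rpow_le_rpow (Nat.cast_nonneg _) (by exact_mod_cast hℓN) (by linarith)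
        calc ∑ ℓ ∈ Finset.Icc 1 N, (ℓ:ℝ) ^ (b - 1)
            ≤ (Finset.Icc 1 N).card • (N:ℝ) ^ (b - 1) :=
              Finset.sum_le_card_nsmul _ _ _ hterm
          _ = (N:ℝ) * (N:ℝ) ^ (b - 1) := by
              rw [Nat.card_Icc]; simp [nsmul_eq_mul]
          _ = (N:ℝ) ^ b := by
              nth_rewrite 1 [← Real.rpow_one (N:ℝ)]
              rw [← Real.rpow_add (by linarith : (0:ℝ) < (N:ℝ))]
              congr 1
              ring
          _ ≤ max (1/b) 1 * (N:ℝ) ^ b := by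
              nth_rewrite 1 [← one_mul ((N:ℝ) ^ b)]
              exact mul_le_mul_of_nonneg_right (le_max_right _ _)
                (Real.rpow_nonneg (Nat.cast_nonneg _) _)
    refine ⟨C ^ ((r - p - 2) / r) * max (1/b) 1, ?_⟩
    filter_upwards [hcard1] with n hn
    have hcR : (1:ℝ) ≤ ((T n).card : ℝ) := by exact_mod_cast hn
    have hc0 : (0:ℝ) < ((T n).card : ℝ) := by linarith
    rw [abs_of_nonneg (hMnn n), betaOf2, if_neg h1, if_neg h2]
    set N : ℕ := ⌊((T n).card : ℝ) ^ ((d : ℝ)⁻¹)⌋₊ with hN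
    have hNle : (N:ℝ) ≤ ((T n).card : ℝ) ^ ((d : ℝ)⁻¹) :=
      Nat.floor_le (Real.rpow_nonneg hc0.le _)
    have hN2 : (N:ℝ) ^ b ≤ ((T n).card : ℝ) ^ ((d:ℝ)⁻¹ * b) := by
      rw [Real.rpow_mul hc0.le]
      exact Real.rpow_le_rpow (Nat.cast_nonneg _) hNle hb0.le
    have hexp : (d:ℝ)*(p+1) - 1 - u = b - 1 := by rw [hb]; ring
    calc Mseq μ T X p r n
        ≤ ((T n).card : ℝ) ^ (-(p/2)) * (C ^ ((r - p - 2) / r) *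
            ∑ ℓ ∈ Finset.Icc 1 N, (ℓ:ℝ) ^ ((d:ℝ)*(p+1) - 1 - u)) := key n
      _ ≤ ((T n).card : ℝ) ^ (-(p/2)) * (C ^ ((r - p - 2) / r) *
            (max (1/b) 1 * ((T n).card : ℝ) ^ ((d:ℝ)⁻¹ * b))) := by
          apply mul_le_mul_of_nonneg_left _ (Real.rpow_nonneg (Nat.cast_nonneg _) _)
          apply mul_le_mul_of_nonneg_left _ (Real.rpow_nonneg hC.le _)
          rw [hexp]
          exact le_trans (hsumb N) (mul_le_mul_of_nonneg_left hN2 (le_trans zero_le_one (le_max_right _ _)))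
      _ = C ^ ((r - p - 2) / r) * max (1/b) 1 *
            (((T n).card : ℝ) ^ (-(p/2)) * ((T n).card : ℝ) ^ ((d:ℝ)⁻¹ * b)) := by ring
      _ = C ^ ((r - p - 2) / r) * max (1/b) 1 *
            ((T n).card : ℝ) ^ (-((1/2 - ((p+1)/p - u/((d:ℝ)*p))) * p)) := by
          rw [← Real.rpow_add hc0]
          have hexp2 : -(p/2) + (d:ℝ)⁻¹ * b = -((1/2 - ((p+1)/p - u/((d:ℝ)*p))) * p) := by
            rw [hb]
            field_simp
            ring
          rw [hexp2]

end Paper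

end
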